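/- If u(x) is the formal power series with u(0)=0 satisfying u(1-u)^2 = x, then the series B̃(x) = u(x)^2·(1-2u(x)) has nonnegative integer coefficients and its first coefficients are [x^2]B̃ = 1, [x^3]B̃ = 2, [x^4]B̃ = 6, [x^5]B̃ = 22. -/

import Mathlib

open PowerSeries Finset

lemma coeff_mul_mem_aux (S : Subsemiring ℚ) (f g : PowerSeries ℚ) (n : ℕ)
    (hf : ∀ k ≤ n, coeff k f ∈ S) (hg : ∀ k ≤ n, coeff k g ∈ S) :
    coeff n (f * g) ∈ S := by
  rw [coeff_mul]
  exact Subsemiring.sum_mem _ fun p hp =>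
    S.mul_mem (hf _ (Finset.HasAntidiagonal.antidiagonal.fst_le hp)) (hg _ (Finset.HasAntidiagonal.antidiagonal.snd_le hp))

lemma z_coeff_nat (z : PowerSeries ℚ) (hz0 : constantCoeff z = 0)
    (hz : z = X * (1 + z) ^ 3) :
    ∀ n, coeff n z ∈ ((Nat.castRingHom ℚ).rangeS : Subsemiring ℚ) := by
  set S : Subsemiring ℚ := (Nat.castRingHom ℚ).rangeS with hS
  intro n
  induction n using Nat.strong_induction_on with
  | _ n ih =>
    match n with
    | 0 => exact ⟨0, by simp [coeff_zero_eq_constantCoeff, hz0]⟩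
    | n + 1 =>
      rw [hz, coeff_succ_X_mul]
      have hexp : ((1 : PowerSeries ℚ) + z) ^ 3
          = 1 + (C (3:ℚ)) * z + (C (3:ℚ)) * (z * z) + z * (z * z) := by
        have : (C (3:ℚ) : PowerSeries ℚ) = 3 := by simp [map_ofNat]
        rw [this]; ring
      rw [hexp]
      have hzle : ∀ k ≤ n, coeff k z ∈ S := fun k hk => ih k (Nat.lt_succ_of_le hk)
      have hz2 : ∀ k ≤ n, coeff k (z * z) ∈ S := fun k hk =>
        coeff_mul_mem_aux S z z k (fun j hj => hzle j (hj.trans hk))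
          (fun j hj => hzle j (hj.trans hk))
      simp only [map_add, coeff_C_mul]
      refine S.add_mem (S.add_mem (S.add_mem ?_ ?_) ?_) ?_
      · rcases n with _ | n
        · exact ⟨1, by simp [coeff_one]⟩
        · exact ⟨0, by simp [coeff_one]⟩
      · exact S.mul_mem ⟨3, by norm_num⟩ (hzle n le_rfl)
      · exact S.mul_mem ⟨3, by norm_num⟩ (hz2 n le_rfl)
      · exact coeff_mul_mem_aux S z (z * z) n hzle hz2

lemma u_coeff_int (u : PowerSeries ℚ) (hu0 : constantCoeff u = 0)
    (hu : u * (1 - u) ^ 2 = X) :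
    ∀ n, coeff n u ∈ ((Int.castRingHom ℚ).range : Subring ℚ) := by
  set T : Subring ℚ := (Int.castRingHom ℚ).range with hT
  have hueq : u = X + (C (2:ℚ)) * (u * u) - u * (u * u) := by
    have h2 : (C (2:ℚ) : PowerSeries ℚ) = 2 := by simp [map_ofNat]
    rw [h2]; linear_combination hu
  intro n
  induction n using Nat.strong_induction_on with
  | _ n ih =>
    have hc2 : coeff n (u * u) ∈ T := by
      rw [coeff_mul]
      refine Subring.sum_mem _ fun p hp => ?_
      rcases Nat.eq_zero_or_pos p.1 with h1 | h1
      · rw [h1, coeff_zero_eq_constantCoeff, hu0, zero_mul]; exact T.zero_mem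
      rcases Nat.eq_zero_or_pos p.2 with h2 | h2
      · rw [h2, coeff_zero_eq_constantCoeff, hu0, mul_zero]; exact T.zero_mem
      · have hmem := Finset.HasAntidiagonal.mem_antidiagonal.mp hp
        exact T.mul_mem (ih p.1 (by omega)) (ih p.2 (by omega))
    have hc3 : coeff n (u * (u * u)) ∈ T := by
      rw [coeff_mul]
      refine Subring.sum_mem _ fun p hp => ?_
      rcases Nat.eq_zero_or_pos p.1 with h1 | h1
      · rw [h1, coeff_zero_eq_constantCoeff, hu0, zero_mul]; exact T.zero_mem
      rcases Nat.eq_zero_or_pos p.2 with h2 | h2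
      · have : coeff p.2 (u * u) = 0 := by
          rw [h2, coeff_zero_eq_constantCoeff, map_mul, hu0, zero_mul]
        rw [this, mul_zero]; exact T.zero_mem
      · have hmem := Finset.HasAntidiagonal.mem_antidiagonal.mp hp
        refine T.mul_mem (ih p.1 (by omega)) ?_
        exact coeff_mul_mem_aux T.toSubsemiring u u p.2
          (fun k hk => ih k (by omega)) (fun k hk => ih k (by omega))
    rw [hueq, map_sub, map_add, coeff_C_mul]
    refine T.sub_mem (T.add_mem ?_ (T.mul_mem ⟨2, by norm_num⟩ hc2)) hc3
    rcases eq_or_ne n 1 with h | h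
    · exact ⟨1, by simp [h, coeff_X]⟩
    · exact ⟨0, by simp [coeff_X, h]⟩

lemma z_small_coeffs (z : PowerSeries ℚ) (hz0 : constantCoeff z = 0)
    (hz : z = X * (1 + z) ^ 3) :
    coeff 1 z = 1 ∧ coeff 2 z = 3 ∧ coeff 3 z = 12 ∧ coeff 4 z = 55 := by
  have hexp : ((1 : PowerSeries ℚ) + z) ^ 3
      = 1 + (C (3:ℚ)) * z + (C (3:ℚ)) * (z * z) + z * (z * z) := by
    have : (C (3:ℚ) : PowerSeries ℚ) = 3 := by simp [map_ofNat]
    rw [this]; ring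
  have e0 : coeff 0 z = 0 := by rw [coeff_zero_eq_constantCoeff, hz0]
  have step : ∀ n : ℕ, coeff (n+1) z
      = coeff n (1 : PowerSeries ℚ) + 3 * coeff n z + 3 * coeff n (z*z)
        + coeff n (z*(z*z)) := by
    intro n
    conv_lhs => rw [hz]
    rw [coeff_succ_X_mul, hexp]
    simp [map_add, coeff_C_mul]
  have c2 : ∀ n : ℕ, coeff n (z*z) = ∑ i ∈ range (n+1), coeff i z * coeff (n-i) z := by
    intro n; rw [coeff_mul, Finset.Nat.sum_antidiagonal_eq_sum_range_succ_mk]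
  have c3 : ∀ n : ℕ, coeff n (z*(z*z))
      = ∑ i ∈ range (n+1), coeff i z * coeff (n-i) (z*z) := by
    intro n; rw [coeff_mul, Finset.Nat.sum_antidiagonal_eq_sum_range_succ_mk]
  have e1 : coeff 1 z = 1 := by
    rw [step 0]; simp [c2, c3, e0, coeff_one]
  have h20 : coeff 0 (z*z) = 0 := by simp [c2, e0]
  have h21 : coeff 1 (z*z) = 0 := by
    rw [c2]; simp [Finset.sum_range_succ, e0, e1]
  have h22 : coeff 2 (z*z) = 1 := by
    rw [c2]; simp [Finset.sum_range_succ, e0, e1]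
  have e2 : coeff 2 z = 3 := by
    rw [step 1, c3]
    simp [Finset.sum_range_succ, e0, e1, h20, h21, coeff_one]
  have h23 : coeff 3 (z*z) = 6 := by
    rw [c2]; simp [Finset.sum_range_succ, e0, e1, e2]; norm_num
  have e3 : coeff 3 z = 12 := by
    rw [step 2, c3]
    simp [Finset.sum_range_succ, e0, e1, e2, h20, h21, h22, coeff_one]
    norm_num
  have e4 : coeff 4 z = 55 := by
    rw [step 3, c3]
    simp [Finset.sum_range_succ, e0, e1, e2, e3, h20, h21, h22, h23, coeff_one]
    norm_num
  exact ⟨e1, e2, e3, e4⟩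

theorem Btilde_coeffs
    (u : PowerSeries ℚ) (hu0 : constantCoeff u = 0)
    (hu : u * (1 - u) ^ 2 = X) :
    let Bt := u ^ 2 * (1 - 2 * u)
    (∀ n : ℕ, ∃ m : ℕ, coeff n Bt = (m : ℚ)) ∧
    coeff 2 Bt = 1 ∧ coeff 3 Bt = 2 ∧ coeff 4 Bt = 6 ∧ coeff 5 Bt = 22 := by
  intro Bt
  have hBt : Bt = u ^ 2 * (1 - 2 * u) := rfl
  -- the auxiliary series z = u/(1-u)
  have hcw : constantCoeff (1 - u) ≠ 0 := by simp [hu0]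
  set w : PowerSeries ℚ := (1 - u)⁻¹ with hwdef
  have hw : (1 - u) * w = 1 := PowerSeries.mul_inv_cancel _ hcw
  set z : PowerSeries ℚ := u * w with hzdef
  have h1z : (1 : PowerSeries ℚ) + z = w := by linear_combination -hw
  have hzeq : z = X * (1 + z) ^ 3 := by
    rw [h1z]
    linear_combination (w^3) * hu - u*w*((1-u)*w+1) * hw
  have hz0 : constantCoeff z = 0 := by
    rw [hzdef, map_mul, hu0, zero_mul]
  -- derivative relation
  have hD := congrArg (d⁄dX ℚ) hu
  rw [derivative_X] at hD
  simp only [Derivation.leibniz, Derivation.leibniz_pow, map_sub, map_one, smul_eq_mul,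
    nsmul_eq_mul, Derivation.map_one_eq_zero, Nat.cast_ofNat, pow_one] at hD
  have hBtrw : u ^ 2 * (1 - 2 * u) = u ^ 2 - (u ^ 3 + u ^ 3) := by ring
  have hDBt : (d⁄dX ℚ) Bt * (1 - u) = 2 * u := by
    rw [hBt, hBtrw]
    simp only [map_sub, map_add, Derivation.leibniz_pow, smul_eq_mul, nsmul_eq_mul,
      Nat.cast_ofNat, pow_one]
    linear_combination (2*u) * hD
  have hDz : (d⁄dX ℚ) Bt = 2 * z := by
    calc (d⁄dX ℚ) Bt = (d⁄dX ℚ) Bt * ((1 - u) * w) := by rw [hw, mul_one]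
      _ = ((d⁄dX ℚ) Bt * (1 - u)) * w := by ring
      _ = (2 * u) * w := by rw [hDBt]
      _ = 2 * z := by rw [hzdef]; ring
  have hco : ∀ n : ℕ, coeff (n+1) Bt * ((n : ℚ) + 1) = 2 * coeff n z := by
    intro n
    have h := congrArg (coeff n) hDz
    have h2 : (2 : PowerSeries ℚ) * z = C (2:ℚ) * z := by simp [map_ofNat]
    rw [coeff_derivative, h2, coeff_C_mul] at h
    exact h
  -- nonneg integer coefficients
  have hznat := z_coeff_nat z hz0 hzeq
  have huint := u_coeff_int u hu0 hu
  have hBtint : ∀ n, coeff n Bt ∈ ((Int.castRingHom ℚ).range : Subring ℚ) := by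
    intro n
    have hBtrw2 : Bt = u * u - (C (2:ℚ)) * (u * (u * u)) := by
      have h2 : (C (2:ℚ) : PowerSeries ℚ) = 2 := by simp [map_ofNat]
      rw [hBt, h2]; ring
    rw [hBtrw2, map_sub, coeff_C_mul]
    set T : Subring ℚ := (Int.castRingHom ℚ).range
    refine T.sub_mem ?_ (T.mul_mem ⟨2, by norm_num⟩ ?_)
    · exact coeff_mul_mem_aux T.toSubsemiring u u n (fun k _ => huint k) (fun k _ => huint k)
    · refine coeff_mul_mem_aux T.toSubsemiring u (u*u) n (fun k _ => huint k) (fun k _ => ?_)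
      exact coeff_mul_mem_aux T.toSubsemiring u u k (fun j _ => huint j) (fun j _ => huint j)
  constructor
  · intro n
    match n with
    | 0 =>
      refine ⟨0, ?_⟩
      rw [coeff_zero_eq_constantCoeff, hBt]
      simp [hu0]
    | n + 1 =>
      obtain ⟨k, hk⟩ := hznat n
      obtain ⟨j, hj⟩ := hBtint (n+1)
      simp only [Int.coe_castRingHom] at hj
      have hk' : (k : ℚ) = coeff n z := hk
      have heq := hco n
      rw [← hj, ← hk'] at heq
      have heqZ : j * ((n : ℤ) + 1) = 2 * (k : ℤ) := by
        have hq : ((j * ((n:ℤ)+1) : ℤ) : ℚ) = ((2 * (k:ℤ) : ℤ) : ℚ) := by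
          push_cast
          linarith [heq]
        exact_mod_cast hq
      have hj0 : 0 ≤ j := by nlinarith [Int.ofNat_nonneg k, Int.ofNat_nonneg n]
      refine ⟨j.toNat, ?_⟩
      rw [← hj]
      exact_mod_cast congrArg (Int.cast : ℤ → ℚ) (Int.toNat_of_nonneg hj0).symm
  · obtain ⟨e1, e2, e3, e4⟩ := z_small_coeffs z hz0 hzeq
    have h1 := hco 1; rw [e1] at h1
    have h2 := hco 2; rw [e2] at h2
    have h3 := hco 3; rw [e3] at h3
    have h4 := hco 4; rw [e4] at h4
    norm_num at h1 h2 h3 h4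
    exact ⟨by linarith, by linarith, by linarith, by linarith⟩
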